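/- Assume D = 0. Then the auxin transport system admits no non-constant periodic solutions: if a : [0,∞) → ℝ^L is a differentiable solution of a'(t) = f(a(t)) with a_i(0) ≥ 0 for all i, and there exists P > 0 such that a(t + P) = a(t) for all t ≥ 0, then a(t) = a(0) for all t ≥ 0. -/

import Mathlib

open Finset Filter

/-- `auxN G κ a i = κ + ∑_{j ~ i} a_j`. -/
noncomputable def auxN {L : ℕ} (G : SimpleGraph (Fin L)) [DecidableRel G.Adj] (κ : ℝ)
    (a : Fin L → ℝ) (i : Fin L) : ℝ :=
  κ + ∑ j ∈ G.neighborFinset i, a j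

/-- The auxin transport vector field
`f_i(a) = D·∑_{k ~ i}(a_k − a_i) + T·∑_{k ~ i}(a_k·a_i/N_k(a) − a_i·a_k/N_i(a))`. -/
noncomputable def auxF {L : ℕ} (G : SimpleGraph (Fin L)) [DecidableRel G.Adj] (κ D T : ℝ)
    (a : Fin L → ℝ) (i : Fin L) : ℝ :=
  D * ∑ k ∈ G.neighborFinset i, (a k - a i) +
    T * ∑ k ∈ G.neighborFinset i,
      (a k * a i / auxN G κ a k - a i * a k / auxN G κ a i)

open Topology

section Helpers

variable {L : ℕ} (G : SimpleGraph (Fin L)) [DecidableRel G.Adj]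

lemma aux_swap (F : Fin L → Fin L → ℝ) :
    ∑ i, ∑ k ∈ G.neighborFinset i, F i k = ∑ i, ∑ k ∈ G.neighborFinset i, F k i := by
  simp only [SimpleGraph.neighborFinset_eq_filter, Finset.sum_filter]
  rw [Finset.sum_comm]
  refine Finset.sum_congr rfl fun i _ => Finset.sum_congr rfl fun k _ => ?_
  simp [G.adj_comm]

lemma aux_N_pos {κ : ℝ} (hκ : 0 < κ) {b : Fin L → ℝ} (hb : ∀ i, 0 ≤ b i) (i : Fin L) :
    0 < auxN G κ b i := by
  have : 0 ≤ ∑ j ∈ G.neighborFinset i, b j := Finset.sum_nonneg fun j _ => hb j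
  unfold auxN; linarith

lemma aux_F_factor (κ T : ℝ) (b : Fin L → ℝ) (i : Fin L) :
    auxF G κ 0 T b i
      = b i * (T * ∑ k ∈ G.neighborFinset i, (b k / auxN G κ b k - b k / auxN G κ b i)) := by
  have h : ∀ k, b k * b i / auxN G κ b k - b i * b k / auxN G κ b i
      = b i * (b k / auxN G κ b k - b k / auxN G κ b i) := fun k => by ring
  simp only [auxF, zero_mul, zero_add, h, ← Finset.mul_sum]
  ring

lemma aux_sumF (κ T : ℝ) (b : Fin L → ℝ) : ∑ i, auxF G κ 0 T b i = 0 := by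
  simp only [auxF, zero_mul, zero_add, ← Finset.mul_sum]
  have h1 : ∑ i, ∑ k ∈ G.neighborFinset i,
      (b k * b i / auxN G κ b k - b i * b k / auxN G κ b i)
      = (∑ i, ∑ k ∈ G.neighborFinset i, b k * b i / auxN G κ b k)
        - ∑ i, ∑ k ∈ G.neighborFinset i, b i * b k / auxN G κ b i := by
    simp [Finset.sum_sub_distrib]
  have h2 := aux_swap G (fun i k => b i * b k / auxN G κ b i)
  have h3 : ∑ i, ∑ k ∈ G.neighborFinset i, b k * b i / auxN G κ b k
      = ∑ i, ∑ k ∈ G.neighborFinset i, b i * b k / auxN G κ b i := by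
    rw [h2]
  rw [h1, h3, sub_self, mul_zero]

lemma aux_key {κ : ℝ} (T : ℝ) (hκ : 0 < κ) {b : Fin L → ℝ} (hb : ∀ i, 0 ≤ b i) :
    ∑ i, (auxF G κ 0 T b i * auxN G κ b i
        + b i * ∑ j ∈ G.neighborFinset i, auxF G κ 0 T b j)
      = T * ∑ i, ∑ k ∈ G.neighborFinset i,
          b i * b k * (auxN G κ b i - auxN G κ b k) ^ 2 / (auxN G κ b i * auxN G κ b k) := by
  have hN : ∀ i, auxN G κ b i ≠ 0 := fun i => (aux_N_pos G hκ hb i).ne'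
  set f : Fin L → ℝ := fun i => auxF G κ 0 T b i with hf
  set N : Fin L → ℝ := fun i => auxN G κ b i with hNdef
  have hA : ∑ i, b i * ∑ j ∈ G.neighborFinset i, f j = ∑ i, f i * (N i - κ) := by
    have h1 : ∑ i, b i * ∑ j ∈ G.neighborFinset i, f j
        = ∑ i, ∑ j ∈ G.neighborFinset i, b i * f j := by
      simp [Finset.mul_sum]
    rw [h1, aux_swap G (fun i j => b i * f j)]
    refine Finset.sum_congr rfl fun i _ => ?_
    rw [← Finset.sum_mul]
    have : ∑ j ∈ G.neighborFinset i, b j = N i - κ := by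
      simp [hNdef, auxN]
    rw [this, mul_comm]
  have hB : ∑ i, (f i * N i + b i * ∑ j ∈ G.neighborFinset i, f j)
      = 2 * ∑ i, f i * N i := by
    rw [Finset.sum_add_distrib, hA]
    have hsum : ∑ i, f i = 0 := aux_sumF G κ T b
    have : ∑ i, f i * (N i - κ) = ∑ i, f i * N i - κ * ∑ i, f i := by
      rw [Finset.mul_sum, ← Finset.sum_sub_distrib]
      exact Finset.sum_congr rfl fun i _ => by ring
    rw [this, hsum, mul_zero, sub_zero]; ring
  have hC : ∑ i, f i * N i
      = T * ∑ i, ∑ k ∈ G.neighborFinset i, (b i * b k * N i / N k - b i * b k) := by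
    rw [Finset.mul_sum]
    refine Finset.sum_congr rfl fun i _ => ?_
    show auxF G κ 0 T b i * N i = _
    simp only [auxF, zero_mul, zero_add]
    rw [mul_assoc, Finset.sum_mul]
    congr 1
    refine Finset.sum_congr rfl fun k _ => ?_
    have hi := hN i; have hk := hN k
    simp only [hNdef]
    field_simp
  have hD : 2 * ∑ i, ∑ k ∈ G.neighborFinset i, (b i * b k * N i / N k - b i * b k)
      = ∑ i, ∑ k ∈ G.neighborFinset i, b i * b k * (N i - N k) ^ 2 / (N i * N k) := by
    have hswap := aux_swap G (fun i k => b i * b k * N i / N k - b i * b k)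
    have h2 : 2 * ∑ i, ∑ k ∈ G.neighborFinset i, (b i * b k * N i / N k - b i * b k)
        = ∑ i, ∑ k ∈ G.neighborFinset i,
            ((b i * b k * N i / N k - b i * b k) + (b k * b i * N k / N i - b k * b i)) := by
      rw [two_mul]
      nth_rewrite 2 [hswap]
      rw [← Finset.sum_add_distrib]
      exact Finset.sum_congr rfl fun i _ => by rw [← Finset.sum_add_distrib]
    rw [h2]
    refine Finset.sum_congr rfl fun i _ => Finset.sum_congr rfl fun k _ => ?_
    have hi : N i ≠ 0 := hN i; have hk : N k ≠ 0 := hN k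
    field_simp
    ring
  calc ∑ i, (f i * N i + b i * ∑ j ∈ G.neighborFinset i, f j)
      = 2 * ∑ i, f i * N i := hB
    _ = T * (2 * ∑ i, ∑ k ∈ G.neighborFinset i, (b i * b k * N i / N k - b i * b k)) := by
        rw [hC]; ring
    _ = _ := by rw [hD]

end Helpers

lemma aux_nonneg_ode (u g : ℝ → ℝ) {s e : ℝ} (hse : s ≤ e) (C : ℝ)
    (hd : ∀ t ∈ Set.Icc s e, HasDerivAt u (u t * g t) t)
    (hg : ∀ t ∈ Set.Icc s e, |g t| ≤ C)
    (hus : 0 ≤ u s) : ∀ t ∈ Set.Icc s e, 0 ≤ u t := by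
  by_contra hcon
  push_neg at hcon
  obtain ⟨t1, ht1, hu1⟩ := hcon
  have hcontu : ContinuousOn u (Set.Icc s e) := fun t ht =>
    (hd t ht).continuousAt.continuousWithinAt
  have hsub : Set.Icc s t1 ⊆ Set.Icc s e := Set.Icc_subset_Icc le_rfl ht1.2
  set K := Set.Icc s t1 ∩ u ⁻¹' Set.Ici 0 with hK
  have hKclosed : IsClosed K :=
    ContinuousOn.preimage_isClosed_of_isClosed (hcontu.mono hsub) isClosed_Icc isClosed_Ici
  have hKne : K.Nonempty := ⟨s, ⟨le_rfl, ht1.1⟩, hus⟩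
  have hKbdd : BddAbove K := ⟨t1, fun x hx => hx.1.2⟩
  set t2 := sSup K with ht2def
  have ht2K : t2 ∈ K := hKclosed.csSup_mem hKne hKbdd
  have ht2 : t2 ∈ Set.Icc s t1 := ht2K.1
  have hut2 : (0:ℝ) ≤ u t2 := ht2K.2
  have ht2lt : t2 < t1 := lt_of_le_of_ne ht2.2 (fun h => by rw [h] at hut2; linarith)
  have hneg : ∀ t, t2 < t → t ≤ t1 → u t < 0 := by
    intro t h1 h2
    by_contra hnn
    push_neg at hnn
    have : t ∈ K := ⟨⟨ht2.1.trans h1.le, h2⟩, hnn⟩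
    exact absurd (le_csSup hKbdd this) (not_le.2 h1)
  have hC : 0 ≤ C := (abs_nonneg _).trans (hg s ⟨le_rfl, hse⟩)
  set h : ℝ → ℝ := fun t => Real.exp (-C * t) * u t with hh
  have hder : ∀ t ∈ Set.Icc s e, HasDerivAt h (Real.exp (-C * t) * (u t * (g t - C))) t := by
    intro t ht
    have h1 : HasDerivAt (fun t : ℝ => -C * t) (-C) t := by
      simpa using (hasDerivAt_id t).const_mul (-C)
    have h3 := h1.exp.fun_mul (hd t ht)
    refine h3.congr_deriv ?_
    ring
  have hmono : MonotoneOn h (Set.Icc t2 t1) := by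
    apply monotoneOn_of_deriv_nonneg (convex_Icc _ _)
    · exact fun t ht =>
        (hder t ⟨ht2.1.trans ht.1, ht.2.trans ht1.2⟩).continuousAt.continuousWithinAt
    · intro t ht
      rw [interior_Icc] at ht
      exact (hder t ⟨ht2.1.trans ht.1.le,
        ht.2.le.trans ht1.2⟩).differentiableAt.differentiableWithinAt
    · intro t ht
      rw [interior_Icc] at ht
      have htmem : t ∈ Set.Icc s e := ⟨ht2.1.trans ht.1.le, ht.2.le.trans ht1.2⟩
      rw [(hder t htmem).deriv]
      have h4 : u t < 0 := hneg t ht.1 ht.2.le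
      have h5 : g t - C ≤ 0 := by
        have := (abs_le.1 (hg t htmem)).2; linarith
      have h6 : 0 ≤ u t * (g t - C) := by nlinarith
      exact mul_nonneg (Real.exp_pos _).le h6
  have hle : h t2 ≤ h t1 :=
    hmono (Set.left_mem_Icc.2 ht2lt.le) (Set.right_mem_Icc.2 ht2lt.le) ht2lt.le
  have h6 : 0 ≤ h t2 := mul_nonneg (Real.exp_pos _).le hut2
  have h7 : h t1 < 0 := mul_neg_of_pos_of_neg (Real.exp_pos _) hu1
  linarith

lemma aux_nonneg_global {L : ℕ} (G : SimpleGraph (Fin L)) [DecidableRel G.Adj]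
    {κ : ℝ} (T : ℝ) (hκ : 0 < κ) (a : ℝ → Fin L → ℝ)
    (hderiv : ∀ t, 0 ≤ t → HasDerivAt a (auxF G κ 0 T (a t)) t)
    (hnonneg : ∀ i, 0 ≤ a 0 i) :
    ∀ t, 0 ≤ t → ∀ i, 0 ≤ a t i := by
  have hcomp : ∀ t, 0 ≤ t → ∀ i, HasDerivAt (fun s => a s i) (auxF G κ 0 T (a t) i) t :=
    fun t ht => hasDerivAt_pi.1 (hderiv t ht)
  have hconta : ∀ t, 0 ≤ t → ∀ i, ContinuousAt (fun s => a s i) t :=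
    fun t ht i => (hcomp t ht i).continuousAt
  have hNanyt : ∀ t, 0 ≤ t → ∀ j, ContinuousAt (fun s => auxN G κ (a s) j) t := by
    intro t ht j
    have hco : Continuous (fun b : Fin L → ℝ => auxN G κ b j) := by
      unfold auxN
      exact continuous_const.add (continuous_finset_sum _ fun k _ => continuous_apply k)
    exact hco.continuousAt.comp (hderiv t ht).continuousAt
  by_contra hcon
  push_neg at hcon
  obtain ⟨t1, ht1, i1, hbad⟩ := hcon
  set B := {t : ℝ | 0 ≤ t ∧ ∃ i, a t i < 0} with hB
  have hBne : B.Nonempty := ⟨t1, ht1, i1, hbad⟩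
  have hBbdd : BddBelow B := ⟨0, fun x hx => hx.1⟩
  set t0 := sInf B with ht0def
  have ht0nn : 0 ≤ t0 := le_csInf hBne fun x hx => hx.1
  have ht0good : ∀ i, 0 ≤ a t0 i := by
    intro i
    by_contra hneg
    push_neg at hneg
    rcases eq_or_lt_of_le ht0nn with h0 | h0
    · exact absurd (hnonneg i) (not_le.2 (h0 ▸ hneg))
    · have hev : ∀ᶠ s in 𝓝 t0, a s i < 0 :=
        (hconta t0 ht0nn i).eventually (eventually_lt_nhds hneg)
      rw [Metric.eventually_nhds_iff] at hev
      obtain ⟨ε, hε, hball⟩ := hev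
      set s := max (t0 - ε / 2) (t0 / 2) with hs
      have hs0 : 0 ≤ s := le_max_iff.2 (Or.inr (by linarith))
      have hslt : s < t0 := max_lt (by linarith) (by linarith)
      have hdist : dist s t0 < ε := by
        rw [Real.dist_eq, abs_of_nonpos (by linarith)]
        have : t0 - ε / 2 ≤ s := le_max_left _ _
        linarith
      have hsB : s ∈ B := ⟨hs0, i, hball hdist⟩
      exact absurd (csInf_le hBbdd hsB) (not_le.2 hslt)
  have hN0 : ∀ j, κ ≤ auxN G κ (a t0) j := by
    intro j
    have : 0 ≤ ∑ k ∈ G.neighborFinset j, a t0 k := Finset.sum_nonneg fun k _ => ht0good k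
    unfold auxN; linarith
  have hev : ∀ᶠ t in 𝓝 t0, ∀ j, κ / 2 < auxN G κ (a t) j := by
    rw [Filter.eventually_all]
    intro j
    exact (hNanyt t0 ht0nn j).eventually (eventually_gt_nhds (by linarith [hN0 j]))
  rw [Metric.eventually_nhds_iff] at hev
  obtain ⟨ε, hε, hball⟩ := hev
  set δ := ε / 2 with hδdef
  have hδ : 0 < δ := by positivity
  have hIccnn : ∀ t ∈ Set.Icc t0 (t0 + δ), 0 ≤ t := fun t ht => ht0nn.trans ht.1
  have hIccN : ∀ t ∈ Set.Icc t0 (t0 + δ), ∀ j, κ / 2 < auxN G κ (a t) j := by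
    intro t ht
    apply hball
    rw [Real.dist_eq, abs_of_nonneg (by linarith [ht.1])]
    have := ht.2; simp only [hδdef] at this ⊢; linarith
  have hIccNne : ∀ t ∈ Set.Icc t0 (t0 + δ), ∀ j, auxN G κ (a t) j ≠ 0 :=
    fun t ht j => (lt_of_lt_of_le (by linarith) (hIccN t ht j).le).ne'
  have hres : ∀ i, ∀ t ∈ Set.Icc t0 (t0 + δ), 0 ≤ a t i := by
    intro i
    set g : ℝ → ℝ := fun t => T * ∑ k ∈ G.neighborFinset i,
      (a t k / auxN G κ (a t) k - a t k / auxN G κ (a t) i) with hg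
    have hgcont : ContinuousOn g (Set.Icc t0 (t0 + δ)) := by
      apply ContinuousOn.mul continuousOn_const
      apply continuousOn_finset_sum
      intro k _
      apply ContinuousOn.sub
      · exact ContinuousOn.div
          (fun t ht => (hconta t (hIccnn t ht) k).continuousWithinAt)
          (fun t ht => (hNanyt t (hIccnn t ht) k).continuousWithinAt)
          (fun t ht => hIccNne t ht k)
      · exact ContinuousOn.div
          (fun t ht => (hconta t (hIccnn t ht) k).continuousWithinAt)
          (fun t ht => (hNanyt t (hIccnn t ht) i).continuousWithinAt)
          (fun t ht => hIccNne t ht i)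
    obtain ⟨C, hC⟩ := isCompact_Icc.exists_bound_of_continuousOn hgcont
    apply aux_nonneg_ode (fun t => a t i) g (by linarith) C
    · intro t ht
      have := hcomp t (hIccnn t ht) i
      rwa [aux_F_factor] at this
    · intro t ht
      have := hC t ht
      rwa [Real.norm_eq_abs] at this
    · exact ht0good i
  obtain ⟨b, hbB, hblt⟩ := exists_lt_of_csInf_lt hBne (show sInf B < t0 + δ by
    rw [← ht0def]; linarith)
  obtain ⟨hb0, i, hbneg⟩ := hbB
  have hbge : t0 ≤ b := csInf_le hBbdd ⟨hb0, i, hbneg⟩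
  exact absurd (hres i b ⟨hbge, hblt.le⟩) (not_le.2 hbneg)

/-- For pure transport (`D = 0`), the system admits no non-constant periodic
solution: any periodic nonnegative solution is constant. -/
theorem auxin_no_periodic {L : ℕ} (hL : 1 ≤ L) (G : SimpleGraph (Fin L)) [DecidableRel G.Adj]
    (κ T : ℝ) (hκ : 0 < κ) (hT : 0 < T)
    (a : ℝ → Fin L → ℝ)
    (hderiv : ∀ t, 0 ≤ t → HasDerivAt a (auxF G κ 0 T (a t)) t)
    (hnonneg : ∀ i, 0 ≤ a 0 i)
    (P : ℝ) (hP : 0 < P) (hper : ∀ t, 0 ≤ t → a (t + P) = a t) :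
    ∀ t, 0 ≤ t → a t = a 0 := by
  have hpos : ∀ t, 0 ≤ t → ∀ i, 0 ≤ a t i := aux_nonneg_global G T hκ a hderiv hnonneg
  set V : ℝ → ℝ := fun t => ∑ i, a t i * auxN G κ (a t) i with hV
  set Vd : ℝ → ℝ := fun t => ∑ i, (auxF G κ 0 T (a t) i * auxN G κ (a t) i
      + a t i * ∑ j ∈ G.neighborFinset i, auxF G κ 0 T (a t) j) with hVd
  have hcomp : ∀ t, 0 ≤ t → ∀ i, HasDerivAt (fun s => a s i) (auxF G κ 0 T (a t) i) t :=
    fun t ht => hasDerivAt_pi.1 (hderiv t ht)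
  have hVderiv : ∀ t, 0 ≤ t → HasDerivAt V (Vd t) t := by
    intro t ht
    have hterm : ∀ i ∈ Finset.univ, HasDerivAt (fun s => a s i * auxN G κ (a s) i)
        (auxF G κ 0 T (a t) i * auxN G κ (a t) i
          + a t i * ∑ j ∈ G.neighborFinset i, auxF G κ 0 T (a t) j) t := by
      intro i _
      have h1 := hcomp t ht i
      have h2 : HasDerivAt (fun s => auxN G κ (a s) i)
          (∑ j ∈ G.neighborFinset i, auxF G κ 0 T (a t) j) t := by
        have h3 : HasDerivAt (fun s => ∑ j ∈ G.neighborFinset i, a s j)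
            (∑ j ∈ G.neighborFinset i, auxF G κ 0 T (a t) j) t :=
          HasDerivAt.fun_sum fun j _ => hcomp t ht j
        have h4 := (hasDerivAt_const t κ).fun_add h3
        simpa [auxN] using h4
      exact h1.mul h2
    exact HasDerivAt.fun_sum hterm
  have hVd_eq : ∀ t, 0 ≤ t → Vd t = T * ∑ i, ∑ k ∈ G.neighborFinset i,
      a t i * a t k * (auxN G κ (a t) i - auxN G κ (a t) k) ^ 2
        / (auxN G κ (a t) i * auxN G κ (a t) k) :=
    fun t ht => aux_key G T hκ (hpos t ht)
  have hNpos : ∀ t, 0 ≤ t → ∀ j, 0 < auxN G κ (a t) j :=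
    fun t ht => aux_N_pos G hκ (hpos t ht)
  have hVd_nonneg : ∀ t, 0 ≤ t → 0 ≤ Vd t := by
    intro t ht
    rw [hVd_eq t ht]
    apply mul_nonneg hT.le
    apply Finset.sum_nonneg; intro i _
    apply Finset.sum_nonneg; intro k _
    apply div_nonneg
    · exact mul_nonneg (mul_nonneg (hpos t ht i) (hpos t ht k)) (sq_nonneg _)
    · exact (mul_pos (hNpos t ht i) (hNpos t ht k)).le
  have hVcont : ContinuousOn V (Set.Ici 0) :=
    fun t ht => (hVderiv t ht).continuousAt.continuousWithinAt
  have hmono : MonotoneOn V (Set.Ici 0) := by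
    apply monotoneOn_of_deriv_nonneg (convex_Ici 0) hVcont
    · intro t ht
      rw [interior_Ici] at ht
      exact (hVderiv t ht.le).differentiableAt.differentiableWithinAt
    · intro t ht
      rw [interior_Ici] at ht
      rw [(hVderiv t ht.le).deriv]
      exact hVd_nonneg t ht.le
  have hVper : ∀ t, 0 ≤ t → V (t + P) = V t := by
    intro t ht
    simp only [hV]
    rw [hper t ht]
  have hit : ∀ s : ℝ, 0 ≤ s → ∀ n : ℕ, V (s + n * P) = V s := by
    intro s hs n
    induction n with
    | zero => simp
    | succ n ih =>
      have h1 : s + (n + 1 : ℕ) * P = (s + n * P) + P := by push_cast; ring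
      have h2 : 0 ≤ s + n * P := by positivity
      rw [h1, hVper _ h2, ih]
  have hVconst : ∀ t, 0 ≤ t → V t = V 0 := by
    intro t ht
    obtain ⟨n, hn⟩ := exists_nat_ge (t / P)
    have htn : t ≤ n * P := by
      rw [div_le_iff₀ hP] at hn; linarith
    have h0n : (0:ℝ) ≤ n * P := by positivity
    have h1 : V 0 ≤ V t := hmono Set.self_mem_Ici ht ht
    have h2 : V t ≤ V ((0:ℝ) + n * P) := by
      rw [zero_add]
      exact hmono ht h0n htn
    rw [hit 0 le_rfl n] at h2
    linarith
  have hVd0 : ∀ t, 0 ≤ t → Vd t = 0 := by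
    intro t ht
    have h1 : HasDerivWithinAt V (Vd t) (Set.Ici 0) t := (hVderiv t ht).hasDerivWithinAt
    have h2 : HasDerivWithinAt V 0 (Set.Ici 0) t := by
      refine (hasDerivWithinAt_const t _ (V 0)).congr (fun x hx => hVconst x hx) (hVconst t ht)
    have hu := uniqueDiffOn_Ici (0:ℝ) t ht
    exact (h1.derivWithin hu).symm.trans (h2.derivWithin hu)
  have hfzero : ∀ t, 0 ≤ t → auxF G κ 0 T (a t) = 0 := by
    intro t ht
    have hsum0 : ∑ i, ∑ k ∈ G.neighborFinset i,
        a t i * a t k * (auxN G κ (a t) i - auxN G κ (a t) k) ^ 2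
          / (auxN G κ (a t) i * auxN G κ (a t) k) = 0 := by
      have := hVd0 t ht
      rw [hVd_eq t ht] at this
      exact (mul_eq_zero.1 this).resolve_left hT.ne'
    have hterm0 : ∀ i, ∀ k ∈ G.neighborFinset i,
        a t i * a t k * (auxN G κ (a t) i - auxN G κ (a t) k) ^ 2
          / (auxN G κ (a t) i * auxN G κ (a t) k) = 0 := by
      intro i k hk
      have houter := (Finset.sum_eq_zero_iff_of_nonneg (fun i _ => Finset.sum_nonneg
        (fun k _ => div_nonneg
          (mul_nonneg (mul_nonneg (hpos t ht i) (hpos t ht k)) (sq_nonneg _))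
          (mul_pos (hNpos t ht i) (hNpos t ht k)).le))).1 hsum0 i (Finset.mem_univ i)
      exact (Finset.sum_eq_zero_iff_of_nonneg (fun k _ => div_nonneg
          (mul_nonneg (mul_nonneg (hpos t ht i) (hpos t ht k)) (sq_nonneg _))
          (mul_pos (hNpos t ht i) (hNpos t ht k)).le)).1 houter k hk
    funext i
    show auxF G κ 0 T (a t) i = 0
    simp only [auxF, zero_mul, zero_add]
    have hzero : ∀ k ∈ G.neighborFinset i,
        a t k * a t i / auxN G κ (a t) k - a t i * a t k / auxN G κ (a t) i = 0 := by
      intro k hk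
      have h := hterm0 i k hk
      rw [div_eq_zero_iff] at h
      rcases h with h | h
      · rcases mul_eq_zero.1 h with hbb | hsq
        · have hbb' : a t k * a t i = 0 := by rw [mul_comm]; exact hbb
          rw [hbb', mul_comm (a t i) (a t k), hbb', zero_div, zero_div, sub_self]
        · have hNN : auxN G κ (a t) i = auxN G κ (a t) k := by
            have := pow_eq_zero_iff two_ne_zero |>.1 hsq
            linarith [sub_eq_zero.1 this]
          rw [hNN]; ring
      · exact absurd h (mul_pos (hNpos t ht i) (hNpos t ht k)).ne'
    rw [Finset.sum_eq_zero hzero, mul_zero]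
  intro t ht
  have hcontOn : ContinuousOn a (Set.Icc 0 t) :=
    fun x hx => (hderiv x hx.1).continuousAt.continuousWithinAt
  have hd0 : ∀ x ∈ Set.Ico 0 t, HasDerivWithinAt a 0 (Set.Ici x) x := by
    intro x hx
    have h := hderiv x hx.1
    rw [hfzero x hx.1] at h
    exact h.hasDerivWithinAt
  exact constant_of_has_deriv_right_zero hcontOn hd0 t ⟨ht, le_rfl⟩
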